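/- Let k be an algebraically closed field of characteristic 2 and consider the elliptic surface over Spec k[t] given by the Weierstrass-type equation y^2 + t^6 y + x^3 + (t^2 + t^6)x + t^7 = 0. Define derivations D_1, D_2 on the coordinate ring by D_1(x) = 0, D_1(y) = t^2, D_1(t) = t^2 and D_2(x) = t^4, D_2(y) = t^{-2}(x^2 + t^6), D_2(t) = 1 (the second defined over t ≠ 0). Then D_1 and D_2 are well-defined derivations annihilating the defining equation, they commute, and D_1^2 = D_2^2 = 0; hence every k-linear combination D = e_1 D_1 + e_2 D_2 satisfies D^2 = 0. -/
import Mathlib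

open MvPolynomial

set_option synthInstance.maxHeartbeats 1000000
set_option maxHeartbeats 2000000

section helpers
variable {k : Type*} [CommRing k] {P : Type*} [CommRing P] [Algebra k P]

/-- Descend a derivation to the quotient by an ideal spanned by two elements. -/
theorem descend_derivation (f g : P) (D : Derivation k P P)
    (hf : Ideal.Quotient.mk (Ideal.span {f, g}) (D f) = 0)
    (hg : Ideal.Quotient.mk (Ideal.span {f, g}) (D g) = 0) :
    ∃ E : Derivation k (P ⧸ Ideal.span {f, g}) (P ⧸ Ideal.span {f, g}),
      ∀ p, E (Ideal.Quotient.mk _ p) = Ideal.Quotient.mk _ (D p) := by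
  set I : Ideal P := Ideal.span {f, g} with hI
  have hfI : Ideal.Quotient.mk I f = 0 :=
    Ideal.Quotient.eq_zero_iff_mem.2 (Ideal.subset_span (by simp))
  have hgI : Ideal.Quotient.mk I g = 0 :=
    Ideal.Quotient.eq_zero_iff_mem.2 (Ideal.subset_span (by simp))
  have key : ∀ z ∈ I, Ideal.Quotient.mk I (D z) = 0 := by
    intro z hz
    rw [hI, Ideal.mem_span_pair] at hz
    obtain ⟨a, b, rfl⟩ := hz
    simp only [map_add, Derivation.leibniz, smul_eq_mul, map_mul, hfI, hgI, hf, hg,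
      mul_zero, zero_mul, add_zero, zero_add]
  have hwd : ∀ a b : P, (Submodule.quotientRel I) a b →
      Ideal.Quotient.mk I (D a) = Ideal.Quotient.mk I (D b) := by
    intro a b hab
    rw [Submodule.quotientRel_def] at hab
    have := key _ hab
    rw [map_sub, map_sub, sub_eq_zero] at this
    exact this
  let F : (P ⧸ I) → (P ⧸ I) := fun q =>
    Quotient.liftOn q (fun p => Ideal.Quotient.mk I (D p)) hwd
  have hF : ∀ p, F (Ideal.Quotient.mk I p) = Ideal.Quotient.mk I (D p) := fun p => rfl
  have hsmul : ∀ (c : k) (p : P),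
      Ideal.Quotient.mk I (c • p) = c • Ideal.Quotient.mk I p := by
    intro c p
    rw [Algebra.smul_def, Algebra.smul_def, map_mul, ← Ideal.Quotient.algebraMap_eq,
      ← IsScalarTower.algebraMap_apply]
  refine ⟨Derivation.mk' ⟨⟨F, ?_⟩, ?_⟩ ?_, hF⟩
  · intro a b
    obtain ⟨a, rfl⟩ := Ideal.Quotient.mk_surjective a
    obtain ⟨b, rfl⟩ := Ideal.Quotient.mk_surjective b
    rw [← map_add, hF, hF, hF, map_add, map_add]
  · intro c q
    obtain ⟨p, rfl⟩ := Ideal.Quotient.mk_surjective q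
    simp only [RingHom.id_apply]
    rw [← hsmul, hF, hF, D.map_smul, hsmul]
  · intro a b
    obtain ⟨a, rfl⟩ := Ideal.Quotient.mk_surjective a
    obtain ⟨b, rfl⟩ := Ideal.Quotient.mk_surjective b
    simp only [LinearMap.coe_mk, AddHom.coe_mk]
    rw [← map_mul, hF]
    simp only [Derivation.leibniz, map_add, smul_eq_mul, map_mul]
    rw [hF, hF]

/-- In characteristic two, the square of a derivation is a derivation. -/
def sqDer (h2 : (2 : P) = 0) (D : Derivation k P P) : Derivation k P P :=
  Derivation.mk' (D.toLinearMap ∘ₗ D.toLinearMap) (by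
    intro a b
    simp only [LinearMap.comp_apply, Derivation.coeFn_coe]
    rw [Derivation.leibniz, map_add]
    simp only [smul_eq_mul]
    rw [Derivation.leibniz, Derivation.leibniz]
    simp only [smul_eq_mul]
    linear_combination (D a * D b) * h2)

theorem sqDer_apply (h2 : (2 : P) = 0) (D : Derivation k P P) (a : P) :
    sqDer h2 D a = D (D a) := rfl

end helpers

theorem stmt_16 {k : Type*} [Field k] [IsAlgClosed k] [CharP k 2]
    (xq yq tq sq :
      MvPolynomial (Fin 4) k ⧸
        Ideal.span {(X 1 : MvPolynomial (Fin 4) k) ^ 2 + (X 2) ^ 6 * (X 1) + (X 0) ^ 3 +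
          ((X 2) ^ 2 + (X 2) ^ 6) * (X 0) + (X 2) ^ 7, (X 2) * (X 3) - 1})
    (hx : xq = Ideal.Quotient.mk _ (X 0))
    (hy : yq = Ideal.Quotient.mk _ (X 1))
    (ht : tq = Ideal.Quotient.mk _ (X 2))
    (hs : sq = Ideal.Quotient.mk _ (X 3)) :
    ∃ D₁ D₂ :
      Derivation k
        (MvPolynomial (Fin 4) k ⧸
          Ideal.span {(X 1 : MvPolynomial (Fin 4) k) ^ 2 + (X 2) ^ 6 * (X 1) + (X 0) ^ 3 +
            ((X 2) ^ 2 + (X 2) ^ 6) * (X 0) + (X 2) ^ 7, (X 2) * (X 3) - 1})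
        (MvPolynomial (Fin 4) k ⧸
          Ideal.span {(X 1 : MvPolynomial (Fin 4) k) ^ 2 + (X 2) ^ 6 * (X 1) + (X 0) ^ 3 +
            ((X 2) ^ 2 + (X 2) ^ 6) * (X 0) + (X 2) ^ 7, (X 2) * (X 3) - 1}),
      D₁ xq = 0 ∧ D₁ yq = tq ^ 2 ∧ D₁ tq = tq ^ 2 ∧
      D₂ xq = tq ^ 4 ∧ D₂ yq = sq ^ 2 * (xq ^ 2 + tq ^ 6) ∧ D₂ tq = 1 ∧
      (∀ b, D₁ (D₂ b) = D₂ (D₁ b)) ∧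
      (∀ b, D₁ (D₁ b) = 0) ∧ (∀ b, D₂ (D₂ b) = 0) ∧
      (∀ e₁ e₂ : k, ∀ b,
        (e₁ • D₁ + e₂ • D₂) ((e₁ • D₁ + e₂ • D₂) b) = 0) := by
  have h2 : (2 : MvPolynomial (Fin 4) k) = 0 := by
    exact_mod_cast CharP.cast_eq_zero (MvPolynomial (Fin 4) k) 2
  set f : MvPolynomial (Fin 4) k := (X 1) ^ 2 + (X 2) ^ 6 * (X 1) + (X 0) ^ 3 +
    ((X 2) ^ 2 + (X 2) ^ 6) * (X 0) + (X 2) ^ 7 with hfdef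
  set g : MvPolynomial (Fin 4) k := (X 2) * (X 3) - 1 with hgdef
  set I : Ideal (MvPolynomial (Fin 4) k) := Ideal.span {f, g} with hIdef
  have hgI : Ideal.Quotient.mk I g = 0 :=
    Ideal.Quotient.eq_zero_iff_mem.2 (Ideal.subset_span (by simp))
  let D1 : Derivation k (MvPolynomial (Fin 4) k) (MvPolynomial (Fin 4) k) :=
    mkDerivation k ![0, X 2 ^ 2, X 2 ^ 2, 1]
  let D2 : Derivation k (MvPolynomial (Fin 4) k) (MvPolynomial (Fin 4) k) :=
    mkDerivation k ![X 2 ^ 4, X 3 ^ 2 * (X 0 ^ 2 + X 2 ^ 6), 1, X 3 ^ 2]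
  have hD1x : D1 (X 0) = 0 := by rw [mkDerivation_X]; rfl
  have hD1y : D1 (X 1) = X 2 ^ 2 := by rw [mkDerivation_X]; rfl
  have hD1t : D1 (X 2) = X 2 ^ 2 := by rw [mkDerivation_X]; rfl
  have hD1s : D1 (X 3) = 1 := by rw [mkDerivation_X]; rfl
  have hD2x : D2 (X 0) = X 2 ^ 4 := by rw [mkDerivation_X]; rfl
  have hD2y : D2 (X 1) = X 3 ^ 2 * (X 0 ^ 2 + X 2 ^ 6) := by rw [mkDerivation_X]; rfl
  have hD2t : D2 (X 2) = 1 := by rw [mkDerivation_X]; rfl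
  have hD2s : D2 (X 3) = X 3 ^ 2 := by rw [mkDerivation_X]; rfl
  -- values on the relations
  have hd1f : D1 f = 0 := by
    rw [hfdef]
    simp only [map_add, Derivation.leibniz, Derivation.leibniz_pow, hD1x, hD1y, hD1t, hD1s,
      smul_eq_mul, nsmul_eq_mul, Nat.cast_ofNat]
    ring_nf
    linear_combination (X 1 * X 2 ^ 2 + 3 * X 1 * X 2 ^ 7 + X 2 ^ 3 * X 0 + 3 * X 2 ^ 7 * X 0
      + 4 * (X 2 : MvPolynomial (Fin 4) k) ^ 8) * h2
  have hd1g : D1 g = X 2 * g := by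
    rw [hgdef]
    simp only [map_sub, Derivation.leibniz, hD1t, hD1s, smul_eq_mul, Derivation.map_one_eq_zero]
    linear_combination (X 2 : MvPolynomial (Fin 4) k) * h2
  have hd2f : D2 f = (X 0 ^ 2 * X 2 ^ 4 + X 2 ^ 10) * (X 2 * X 3 + 1) * g := by
    rw [hfdef, hgdef]
    simp only [map_add, Derivation.leibniz, Derivation.leibniz_pow, hD2x, hD2y, hD2t, hD2s,
      smul_eq_mul, nsmul_eq_mul, Nat.cast_ofNat]
    ring_nf
    linear_combination (X 1 * X 3 ^ 2 * X 0 ^ 2 + X 1 * X 3 ^ 2 * X 2 ^ 6 + 3 * X 1 * X 2 ^ 5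
      + X 0 * X 2 + 3 * X 0 * X 2 ^ 5 + 2 * X 0 ^ 2 * X 2 ^ 4 + 4 * X 2 ^ 6
      + (X 2 : MvPolynomial (Fin 4) k) ^ 10) * h2
  have hd2g : D2 g = X 3 * g := by
    rw [hgdef]
    simp only [map_sub, Derivation.leibniz, hD2t, hD2s, smul_eq_mul, Derivation.map_one_eq_zero]
    linear_combination (X 3 : MvPolynomial (Fin 4) k) * h2
  -- squares vanish on the polynomial ring
  have hsq1 : ∀ p, D1 (D1 p) = 0 := by
    have : sqDer h2 D1 = 0 := by
      apply derivation_ext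
      intro i
      fin_cases i
      · show D1 (D1 (X 0)) = (0 : Derivation k (MvPolynomial (Fin 4) k)
          (MvPolynomial (Fin 4) k)) (X 0)
        rw [hD1x, map_zero, Derivation.zero_apply]
      · show D1 (D1 (X 1)) = (0 : Derivation k (MvPolynomial (Fin 4) k)
          (MvPolynomial (Fin 4) k)) (X 1)
        rw [hD1y, Derivation.zero_apply]
        simp only [Derivation.leibniz_pow, hD1t, smul_eq_mul, nsmul_eq_mul, Nat.cast_ofNat,
          pow_one]
        linear_combination (X 2 : MvPolynomial (Fin 4) k) ^ 3 * h2
      · show D1 (D1 (X 2)) = (0 : Derivation k (MvPolynomial (Fin 4) k)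
          (MvPolynomial (Fin 4) k)) (X 2)
        rw [hD1t, Derivation.zero_apply]
        simp only [Derivation.leibniz_pow, hD1t, smul_eq_mul, nsmul_eq_mul, Nat.cast_ofNat,
          pow_one]
        linear_combination (X 2 : MvPolynomial (Fin 4) k) ^ 3 * h2
      · show D1 (D1 (X 3)) = (0 : Derivation k (MvPolynomial (Fin 4) k)
          (MvPolynomial (Fin 4) k)) (X 3)
        rw [hD1s, Derivation.map_one_eq_zero, Derivation.zero_apply]
    intro p
    have := congrFun (congrArg (fun (D : Derivation k (MvPolynomial (Fin 4) k)
      (MvPolynomial (Fin 4) k)) => (D : MvPolynomial (Fin 4) k → MvPolynomial (Fin 4) k)) this) p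
    simpa [sqDer_apply] using this
  have hsq2 : ∀ p, D2 (D2 p) = 0 := by
    have : sqDer h2 D2 = 0 := by
      apply derivation_ext
      intro i
      fin_cases i
      · show D2 (D2 (X 0)) = (0 : Derivation k (MvPolynomial (Fin 4) k)
          (MvPolynomial (Fin 4) k)) (X 0)
        rw [hD2x, Derivation.zero_apply]
        simp only [Derivation.leibniz_pow, hD2t, smul_eq_mul, nsmul_eq_mul, Nat.cast_ofNat,
          pow_one, mul_one]
        linear_combination (2 * (X 2 : MvPolynomial (Fin 4) k) ^ 3) * h2
      · show D2 (D2 (X 1)) = (0 : Derivation k (MvPolynomial (Fin 4) k)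
          (MvPolynomial (Fin 4) k)) (X 1)
        rw [hD2y, Derivation.zero_apply]
        simp only [Derivation.leibniz, Derivation.leibniz_pow, map_add, hD2x, hD2t, hD2s,
          smul_eq_mul, nsmul_eq_mul, Nat.cast_ofNat, pow_one, mul_one]
        ring_nf
        linear_combination (X 3 ^ 2 * X 0 * X 2 ^ 4 + 3 * X 3 ^ 2 * X 2 ^ 5
          + X 3 ^ 3 * X 0 ^ 2 + (X 3 : MvPolynomial (Fin 4) k) ^ 3 * X 2 ^ 6) * h2
      · show D2 (D2 (X 2)) = (0 : Derivation k (MvPolynomial (Fin 4) k)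
          (MvPolynomial (Fin 4) k)) (X 2)
        rw [hD2t, Derivation.map_one_eq_zero, Derivation.zero_apply]
      · show D2 (D2 (X 3)) = (0 : Derivation k (MvPolynomial (Fin 4) k)
          (MvPolynomial (Fin 4) k)) (X 3)
        rw [hD2s, Derivation.zero_apply]
        simp only [Derivation.leibniz_pow, hD2s, smul_eq_mul, nsmul_eq_mul, Nat.cast_ofNat,
          pow_one]
        linear_combination (X 3 : MvPolynomial (Fin 4) k) ^ 3 * h2
    intro p
    have := congrFun (congrArg (fun (D : Derivation k (MvPolynomial (Fin 4) k)
      (MvPolynomial (Fin 4) k)) => (D : MvPolynomial (Fin 4) k → MvPolynomial (Fin 4) k)) this) p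
    simpa [sqDer_apply] using this
  -- the two derivations commute on the polynomial ring
  have hcomm : ∀ p, D1 (D2 p) = D2 (D1 p) := by
    have : ⁅D1, D2⁆ = 0 := by
      apply derivation_ext
      intro i
      fin_cases i
      · show ⁅D1, D2⁆ (X 0) = (0 : Derivation k (MvPolynomial (Fin 4) k)
          (MvPolynomial (Fin 4) k)) (X 0)
        rw [Derivation.commutator_apply, Derivation.zero_apply, hD2x, hD1x, map_zero, sub_zero]
        simp only [Derivation.leibniz_pow, hD1t, smul_eq_mul, nsmul_eq_mul, Nat.cast_ofNat,
          pow_one]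
        linear_combination (2 * (X 2 : MvPolynomial (Fin 4) k) ^ 5) * h2
      · show ⁅D1, D2⁆ (X 1) = (0 : Derivation k (MvPolynomial (Fin 4) k)
          (MvPolynomial (Fin 4) k)) (X 1)
        rw [Derivation.commutator_apply, Derivation.zero_apply, hD2y, hD1y]
        simp only [Derivation.leibniz, Derivation.leibniz_pow, map_add, hD1x, hD1t, hD1s, hD2t,
          smul_eq_mul, nsmul_eq_mul, Nat.cast_ofNat, pow_one, mul_one, mul_zero, zero_mul,
          add_zero, zero_add]
        ring_nf
        linear_combination (X 3 * X 2 ^ 6 + X 3 * X 0 ^ 2 + 3 * X 3 ^ 2 * X 2 ^ 7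
          - (X 2 : MvPolynomial (Fin 4) k)) * h2
      · show ⁅D1, D2⁆ (X 2) = (0 : Derivation k (MvPolynomial (Fin 4) k)
          (MvPolynomial (Fin 4) k)) (X 2)
        rw [Derivation.commutator_apply, Derivation.zero_apply, hD2t, hD1t,
          Derivation.map_one_eq_zero, zero_sub]
        simp only [Derivation.leibniz_pow, hD2t, smul_eq_mul, nsmul_eq_mul, Nat.cast_ofNat,
          pow_one, mul_one]
        linear_combination (-(X 2 : MvPolynomial (Fin 4) k)) * h2
      · show ⁅D1, D2⁆ (X 3) = (0 : Derivation k (MvPolynomial (Fin 4) k)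
          (MvPolynomial (Fin 4) k)) (X 3)
        rw [Derivation.commutator_apply, Derivation.zero_apply, hD2s, hD1s,
          Derivation.map_one_eq_zero, sub_zero]
        simp only [Derivation.leibniz_pow, hD1s, smul_eq_mul, nsmul_eq_mul, Nat.cast_ofNat,
          pow_one, mul_one]
        linear_combination (X 3 : MvPolynomial (Fin 4) k) * h2
    intro p
    have h := congrFun (congrArg (fun (D : Derivation k (MvPolynomial (Fin 4) k)
      (MvPolynomial (Fin 4) k)) => (D : MvPolynomial (Fin 4) k → MvPolynomial (Fin 4) k)) this) p
    simp only [Derivation.commutator_apply, Derivation.zero_apply] at h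
    exact sub_eq_zero.mp h
  -- descend to the quotient
  obtain ⟨E1, hE1⟩ := descend_derivation f g D1 (by rw [hd1f, map_zero])
    (by rw [hd1g, map_mul, hgI, mul_zero])
  obtain ⟨E2, hE2⟩ := descend_derivation f g D2 (by rw [hd2f, map_mul, hgI, mul_zero])
    (by rw [hd2g, map_mul, hgI, mul_zero])
  refine ⟨E1, E2, ?_, ?_, ?_, ?_, ?_, ?_, ?_, ?_, ?_, ?_⟩
  · rw [hx, hE1, hD1x, map_zero]
  · rw [hy, ht, hE1, hD1y, map_pow]
  · rw [ht, hE1, hD1t, map_pow]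
  · rw [hx, ht, hE2, hD2x, map_pow]
  · rw [hy, hs, hx, ht, hE2, hD2y, map_mul, map_pow, map_add, map_pow, map_pow]
  · rw [ht, hE2, hD2t, map_one]
  · intro b
    obtain ⟨p, rfl⟩ := Ideal.Quotient.mk_surjective b
    rw [hE2, hE1, hE1, hE2, hcomm]
  · intro b
    obtain ⟨p, rfl⟩ := Ideal.Quotient.mk_surjective b
    rw [hE1, hE1, hsq1, map_zero]
  · intro b
    obtain ⟨p, rfl⟩ := Ideal.Quotient.mk_surjective b
    rw [hE2, hE2, hsq2, map_zero]
  · intro e₁ e₂ b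
    have hq1 : ∀ b, E1 (E1 b) = 0 := by
      intro b
      obtain ⟨p, rfl⟩ := Ideal.Quotient.mk_surjective b
      rw [hE1, hE1, hsq1, map_zero]
    have hq2 : ∀ b, E2 (E2 b) = 0 := by
      intro b
      obtain ⟨p, rfl⟩ := Ideal.Quotient.mk_surjective b
      rw [hE2, hE2, hsq2, map_zero]
    have hqc : ∀ b, E1 (E2 b) = E2 (E1 b) := by
      intro b
      obtain ⟨p, rfl⟩ := Ideal.Quotient.mk_surjective b
      rw [hE2, hE1, hE1, hE2, hcomm]
    simp only [Derivation.add_apply, Derivation.smul_apply, map_add, Derivation.map_smul,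
      hq1, hq2, smul_zero, add_zero, zero_add]
    rw [hqc b, smul_smul, smul_smul, mul_comm e₂ e₁, ← smul_add]
    have hz : E2 (E1 b) + E2 (E1 b) = 0 := by
      have : E2 (E1 b) + E2 (E1 b) = (2 : MvPolynomial (Fin 4) k ⧸ I) * E2 (E1 b) := by ring
      rw [this]
      have h2Q : (2 : MvPolynomial (Fin 4) k ⧸ I) = 0 := by
        have : ((2 : MvPolynomial (Fin 4) k ⧸ I)) = Ideal.Quotient.mk I 2 := by
          rw [map_ofNat]
        rw [this, h2, map_zero]
      rw [h2Q, zero_mul]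
    rw [hz, smul_zero]
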